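/- Let T > 0 and let b : ℝ → ℝ be a bounded locally Lipschitz vector field with flow X : [−T,T] × ℝ → ℝ (so ∂_t X(t,x) = b(X(t,x)) and X(0,x) = x). Let φ : [0,∞) → [0,∞) be continuous with φ(ξ) > 0 for ξ > 0, and assume X satisfies the weak compressibility condition: |X(t,I)| ≥ φ(|I|) for every bounded interval I ⊂ ℝ and every t ∈ [−T,T], where |·| denotes Lebesgue measure and X(t,I) the image of I under X(t,·). Then for every t ∈ [−T,T], every x ∈ ℝ and every δ > 0, one has φ(|X(t,x+δ) − X(t,x)|) ≤ δ; consequently, setting ψ(s) = sup{ξ ≥ 0 : φ(ξ) ≤ s}, one has |X(t,x+δ) − X(t,x)| ≤ ψ(δ). -/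

import Mathlib

open MeasureTheory Set


private lemma exists_lipschitzOnWith_of_locallyLipschitz {f : ℝ → ℝ} {M : ℝ}
    (hbd : ∀ x, |f x| ≤ M) (hf : LocallyLipschitz f) {s : Set ℝ} (hs : IsCompact s) :
    ∃ K : NNReal, LipschitzOnWith K f s := by
  choose K U hU hK using hf
  have hcov : s ⊆ ⋃ x : ℝ, interior (U x) := fun y _ =>
    Set.mem_iUnion.2 ⟨y, mem_interior_iff_mem_nhds.2 (hU y)⟩
  obtain ⟨I, hI⟩ := hs.elim_finite_subcover (fun x => interior (U x))
    (fun _ => isOpen_interior) hcov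
  obtain ⟨δ, hδ, hball⟩ := lebesgue_number_lemma_of_metric (ι := {i // i ∈ I})
    (c := fun i => interior (U i)) hs (fun _ => isOpen_interior)
    (fun y hy => by
      obtain ⟨i, hi, h⟩ := Set.mem_iUnion₂.1 (hI hy)
      exact Set.mem_iUnion.2 ⟨⟨i, hi⟩, h⟩)
  have hM0 : 0 ≤ M := le_trans (abs_nonneg _) (hbd 0)
  refine ⟨I.sup K + Real.toNNReal (2 * M / δ), LipschitzOnWith.of_dist_le_mul ?_⟩
  intro x hx y hy
  rcases lt_or_ge (dist x y) δ with h | h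
  · obtain ⟨i, hi⟩ := hball x hx
    have hxU : x ∈ U i := interior_subset (hi (Metric.mem_ball_self hδ))
    have hyU : y ∈ U i := interior_subset (hi (by rwa [Metric.mem_ball, dist_comm]))
    have h1 : dist (f x) (f y) ≤ K i * dist x y := (hK i).dist_le_mul x hxU y hyU
    have h2 : (K (i : ℝ) : ℝ) ≤ ((I.sup K + Real.toNNReal (2 * M / δ) : NNReal) : ℝ) := by
      have : K (i : ℝ) ≤ I.sup K + Real.toNNReal (2 * M / δ) :=
        le_trans (Finset.le_sup i.2) le_self_add
      exact_mod_cast this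
    exact le_trans h1 (mul_le_mul_of_nonneg_right h2 dist_nonneg)
  · have hx' := abs_le.1 (hbd x)
    have hy' := abs_le.1 (hbd y)
    have h1 : dist (f x) (f y) ≤ 2 * M := by
      rw [Real.dist_eq]
      exact abs_le.2 ⟨by linarith [hx'.1, hy'.2], by linarith [hx'.2, hy'.1]⟩
    have h2 : (2 * M / δ : ℝ) ≤ ((I.sup K + Real.toNNReal (2 * M / δ) : NNReal) : ℝ) := by
      refine le_trans (Real.le_coe_toNNReal _) ?_
      exact_mod_cast (le_add_self : Real.toNNReal (2 * M / δ) ≤ I.sup K + _)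
    calc dist (f x) (f y) ≤ 2 * M := h1
      _ = 2 * M / δ * δ := by field_simp
      _ ≤ 2 * M / δ * dist x y :=
          mul_le_mul_of_nonneg_left h (div_nonneg (by linarith) hδ.le)
      _ ≤ _ := mul_le_mul_of_nonneg_right h2 dist_nonneg

private lemma flow_dist_fwd {K : NNReal} {S : Set ℝ} {b : ℝ → ℝ} (hb : LipschitzOnWith K b S)
    {f g : ℝ → ℝ} {t : ℝ} (ht : 0 ≤ t)
    (hf : ∀ s ∈ Set.Icc 0 t, HasDerivAt f (b (f s)) s)
    (hg : ∀ s ∈ Set.Icc 0 t, HasDerivAt g (b (g s)) s)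
    (hfS : ∀ s ∈ Set.Icc 0 t, f s ∈ S)
    (hgS : ∀ s ∈ Set.Icc 0 t, g s ∈ S) :
    dist (f t) (g t) ≤ dist (f 0) (g 0) * Real.exp (K * t) := by
  have h := dist_le_of_trajectories_ODE_of_mem (v := fun _ => b) (s := fun _ => S)
    (a := 0) (b := t) (δ := dist (f 0) (g 0)) (fun _ _ => hb)
    (fun s hs => (hf s hs).continuousAt.continuousWithinAt)
    (fun s hs => (hf s (Set.Ico_subset_Icc_self hs)).hasDerivWithinAt)
    (fun s hs => hfS s (Set.Ico_subset_Icc_self hs))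
    (fun s hs => (hg s hs).continuousAt.continuousWithinAt)
    (fun s hs => (hg s (Set.Ico_subset_Icc_self hs)).hasDerivWithinAt)
    (fun s hs => hgS s (Set.Ico_subset_Icc_self hs))
    le_rfl t (Set.right_mem_Icc.2 ht)
  simpa using h

private lemma flow_dist {K : NNReal} {S : Set ℝ} {b : ℝ → ℝ} (hb : LipschitzOnWith K b S)
    {f g : ℝ → ℝ} {t : ℝ}
    (hf : ∀ s ∈ Set.uIcc 0 t, HasDerivAt f (b (f s)) s)
    (hg : ∀ s ∈ Set.uIcc 0 t, HasDerivAt g (b (g s)) s)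
    (hfS : ∀ s ∈ Set.uIcc 0 t, f s ∈ S)
    (hgS : ∀ s ∈ Set.uIcc 0 t, g s ∈ S) :
    dist (f t) (g t) ≤ dist (f 0) (g 0) * Real.exp (K * |t|) := by
  rcases le_total 0 t with h | h
  · rw [abs_of_nonneg h]
    rw [Set.uIcc_of_le h] at hf hg hfS hgS
    exact flow_dist_fwd hb h hf hg hfS hgS
  · rw [Set.uIcc_of_ge h] at hf hg hfS hgS
    have hb' : LipschitzOnWith K (fun y => -(b y)) S := by
      rw [← one_mul K]
      exact LipschitzWith.id.neg.comp_lipschitzOnWith hb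
    have hmem : ∀ s ∈ Set.Icc 0 (-t), -s ∈ Set.Icc t 0 := fun s hs =>
      ⟨by linarith [hs.2], by linarith [hs.1]⟩
    have key := flow_dist_fwd (b := fun y => -(b y)) hb' (t := -t)
      (f := fun s => f (-s)) (g := fun s => g (-s)) (neg_nonneg.2 h)
      (fun s hs => by
        simpa [mul_comm, Function.comp_def] using (hf (-s) (hmem s hs)).comp s (hasDerivAt_neg s))
      (fun s hs => by
        simpa [mul_comm, Function.comp_def] using (hg (-s) (hmem s hs)).comp s (hasDerivAt_neg s))
      (fun s hs => hfS (-s) (hmem s hs))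
      (fun s hs => hgS (-s) (hmem s hs))
    simpa [abs_of_nonpos h] using key

private lemma flow_eq {K : NNReal} {S : Set ℝ} {b : ℝ → ℝ} (hb : LipschitzOnWith K b S)
    {f g : ℝ → ℝ} {t : ℝ}
    (hf : ∀ s ∈ Set.uIcc 0 t, HasDerivAt f (b (f s)) s)
    (hg : ∀ s ∈ Set.uIcc 0 t, HasDerivAt g (b (g s)) s)
    (hfS : ∀ s ∈ Set.uIcc 0 t, f s ∈ S)
    (hgS : ∀ s ∈ Set.uIcc 0 t, g s ∈ S)
    (h0 : f 0 = g 0) : f t = g t := by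
  have h := flow_dist hb hf hg hfS hgS
  rw [h0, dist_self, zero_mul] at h
  exact dist_le_zero.1 h

/-- In dimension one, if the flow `X` of a bounded locally Lipschitz
field `b` on `[-T,T]` satisfies the weak compressibility condition `|X(t,I)| ≥ φ(|I|)`
for every bounded interval `I`, then `φ(|X(t,x+δ) - X(t,x)|) ≤ δ` for all `t, x, δ > 0`;
consequently, with `ψ(s) = sup{ξ ≥ 0 : φ(ξ) ≤ s}` (an extended real supremum),
`|X(t,x+δ) - X(t,x)| ≤ ψ(δ)`. -/
theorem stmt8 (T : ℝ) (hT : 0 < T) (b : ℝ → ℝ)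
    (hbbd : ∃ M : ℝ, ∀ x, |b x| ≤ M) (hblip : LocallyLipschitz b)
    (X : ℝ → ℝ → ℝ) (hX0 : ∀ x, X 0 x = x)
    (hXode : ∀ x, ∀ t ∈ Set.Icc (-T) T, HasDerivAt (fun s => X s x) (b (X t x)) t)
    (φ : ℝ → ℝ) (hφc : ContinuousOn φ (Set.Ici 0)) (hφpos : ∀ ξ > (0 : ℝ), 0 < φ ξ)
    (hweak : ∀ a c : ℝ, a ≤ c → ∀ t ∈ Set.Icc (-T) T,
      φ (c - a) ≤ (volume (X t '' Set.Icc a c)).toReal) :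
    ∀ t ∈ Set.Icc (-T) T, ∀ x : ℝ, ∀ δ > (0 : ℝ),
      φ |X t (x + δ) - X t x| ≤ δ ∧
      ENNReal.ofReal |X t (x + δ) - X t x| ≤
        ⨆ (ξ : ℝ) (_ : 0 ≤ ξ ∧ φ ξ ≤ δ), ENNReal.ofReal ξ := by
  obtain ⟨M₀, hM₀⟩ := hbbd
  set M : ℝ := max M₀ 0 with hMdef
  have hMb : ∀ y, |b y| ≤ M := fun y => le_trans (hM₀ y) (le_max_left _ _)
  have hM0 : 0 ≤ M := le_max_right _ _
  intro t ht x δ hδ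
  have hMT : 0 ≤ M * T := mul_nonneg hM0 hT.le
  -- trajectory bound
  have key : ∀ y : ℝ, ∀ s ∈ Set.Icc (-T) T, |X s y - y| ≤ M * T := by
    intro y s hs
    have h0T : (0:ℝ) ∈ Set.Icc (-T) T := ⟨by linarith, by linarith⟩
    have hmvt := (convex_Icc (-T) T).norm_image_sub_le_of_norm_hasDerivWithin_le
      (f := fun s => X s y) (f' := fun s => b (X s y)) (C := M)
      (fun σ hσ => (hXode y σ hσ).hasDerivWithinAt)
      (fun σ _ => by simpa [Real.norm_eq_abs] using hMb (X σ y)) h0T hs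
    have h1 : |X s y - y| ≤ M * |s| := by
      simpa [hX0 y, Real.norm_eq_abs] using hmvt
    calc |X s y - y| ≤ M * |s| := h1
      _ ≤ M * T := mul_le_mul_of_nonneg_left (abs_le.2 ⟨hs.1, hs.2⟩) hM0
  -- compact set containing all relevant trajectories
  set S : Set ℝ := Set.Icc (x - (2*(M*T) + 1)) (x + δ + (2*(M*T) + 1)) with hSdef
  obtain ⟨K, hK⟩ := exists_lipschitzOnWith_of_locallyLipschitz hMb hblip
    (isCompact_Icc (a := x - (2*(M*T) + 1)) (b := x + δ + (2*(M*T) + 1)))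
  have hmemS : ∀ y, x - (M*T) ≤ y → y ≤ x + δ + (M*T) →
      ∀ s ∈ Set.Icc (-T) T, X s y ∈ S := by
    intro y hy1 hy2 s hs
    have h := abs_le.1 (key y s hs)
    exact ⟨by linarith [h.1], by linarith [h.2]⟩
  -- time memberships
  have hmt : -t ∈ Set.Icc (-T) T := ⟨by linarith [ht.2], by linarith [ht.1]⟩
  have htime1 : ∀ s ∈ Set.uIcc 0 (-t), s ∈ Set.Icc (-T) T := by
    intro s hs
    rcases Set.mem_uIcc.1 hs with ⟨h1, h2⟩ | ⟨h1, h2⟩ <;>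
      exact ⟨by linarith [ht.1, ht.2], by linarith [ht.1, ht.2]⟩
  have htime2 : ∀ s ∈ Set.uIcc 0 (-t), t + s ∈ Set.Icc (-T) T := by
    intro s hs
    rcases Set.mem_uIcc.1 hs with ⟨h1, h2⟩ | ⟨h1, h2⟩ <;>
      exact ⟨by linarith [ht.1, ht.2], by linarith [ht.1, ht.2]⟩
  have htime3 : ∀ s ∈ Set.uIcc 0 t, s ∈ Set.Icc (-T) T := by
    intro s hs
    rcases Set.mem_uIcc.1 hs with ⟨h1, h2⟩ | ⟨h1, h2⟩ <;>
      exact ⟨by linarith [ht.1, ht.2], by linarith [ht.1, ht.2]⟩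
  -- group property
  have grp : ∀ y ∈ Set.Icc x (x + δ), X (-t) (X t y) = y := by
    intro y hy
    have hXty := abs_le.1 (key y t ht)
    have h := flow_eq hK (f := fun s => X (t + s) y) (g := fun s => X s (X t y)) (t := -t)
      (fun s hs => by
        simpa [Function.comp_def] using (hXode y (t + s) (htime2 s hs)).comp s ((hasDerivAt_id s).const_add t))
      (fun s hs => hXode (X t y) s (htime1 s hs))
      (fun s hs => hmemS y (by linarith [hy.1]) (by linarith [hy.2]) (t + s) (htime2 s hs))
      (fun s hs => hmemS (X t y) (by linarith [hy.1, hXty.1]) (by linarith [hy.2, hXty.2])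
        s (htime1 s hs))
      (by simp [hX0])
    simpa [hX0] using h.symm
  -- Lipschitz continuity of X t on [x, x+δ]
  have hcont : ContinuousOn (fun y => X t y) (Set.Icc x (x + δ)) := by
    have hL : LipschitzOnWith (Real.toNNReal (Real.exp (K * |t|))) (fun y => X t y)
        (Set.Icc x (x + δ)) := by
      apply LipschitzOnWith.of_dist_le_mul
      intro y1 hy1 y2 hy2
      have hd := flow_dist hK (f := fun s => X s y1) (g := fun s => X s y2) (t := t)
        (fun s hs => hXode y1 s (htime3 s hs))
        (fun s hs => hXode y2 s (htime3 s hs))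
        (fun s hs => hmemS y1 (by linarith [hy1.1]) (by linarith [hy1.2]) s (htime3 s hs))
        (fun s hs => hmemS y2 (by linarith [hy2.1]) (by linarith [hy2.2]) s (htime3 s hs))
      have hd' : dist (X t y1) (X t y2) ≤ dist y1 y2 * Real.exp (K * |t|) := by
        simpa [hX0] using hd
      rw [Real.coe_toNNReal _ (Real.exp_nonneg _), mul_comm]
      exact hd'
    exact hL.continuousOn
  set u := X t x with hu
  set v := X t (x + δ) with hv
  have hxmem : x ∈ Set.Icc x (x + δ) := ⟨le_refl _, by linarith⟩
  have hxdmem : x + δ ∈ Set.Icc x (x + δ) := ⟨by linarith, le_refl _⟩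
  have hconn : Set.uIcc u v ⊆ (fun y => X t y) '' Set.Icc x (x + δ) := by
    have hpc : IsPreconnected ((fun y => X t y) '' Set.Icc x (x + δ)) :=
      isPreconnected_Icc.image _ hcont
    exact hpc.ordConnected.uIcc_subset ⟨x, hxmem, rfl⟩ ⟨x + δ, hxdmem, rfl⟩
  have himg : X (-t) '' Set.uIcc u v ⊆ Set.Icc x (x + δ) := by
    rintro _ ⟨w, hw, rfl⟩
    obtain ⟨y, hy, rfl⟩ := hconn hw
    rw [grp y hy]
    exact hy
  have h1 : φ (max u v - min u v) ≤ (volume (X (-t) '' Set.uIcc u v)).toReal := by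
    have := hweak (min u v) (max u v) min_le_max (-t) hmt
    simpa [Set.uIcc] using this
  have hvol : volume (Set.Icc x (x + δ)) = ENNReal.ofReal δ := by
    rw [Real.volume_Icc]
    congr 1
    ring
  have h2 : (volume (X (-t) '' Set.uIcc u v)).toReal ≤ δ := by
    have hmono : volume (X (-t) '' Set.uIcc u v) ≤ volume (Set.Icc x (x + δ)) :=
      measure_mono himg
    calc (volume (X (-t) '' Set.uIcc u v)).toReal
        ≤ (volume (Set.Icc x (x + δ))).toReal :=
          ENNReal.toReal_mono (by rw [hvol]; exact ENNReal.ofReal_ne_top) hmono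
      _ = δ := by rw [hvol, ENNReal.toReal_ofReal hδ.le]
  have habs : max u v - min u v = |X t (x + δ) - X t x| := by
    rw [max_sub_min_eq_abs, abs_sub_comm]
  have hpart1 : φ |X t (x + δ) - X t x| ≤ δ := by
    rw [← habs]
    exact le_trans h1 h2
  refine ⟨hpart1, ?_⟩
  exact le_iSup_of_le |X t (x + δ) - X t x|
    (le_iSup_of_le ⟨abs_nonneg _, hpart1⟩ le_rfl)
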